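/- Let a : ℝ^d → ℝ^{d×d} take values in symmetric nonnegative-definite matrices with all second-order derivatives of a bounded by a constant L. Then for any symmetric matrix V ∈ ℝ^{d×d} and any l ∈ {1,...,d}, |D_l a^{ij}(x) V^{ij}|² ≤ N a^{ij}(x) V^{ik} V^{jk} for all x, where N depends only on L and d (summation over repeated indices). -/

import Mathlib

lemma oneDim_est (φ φ' : ℝ → ℝ) (M : ℝ) (hM : 0 < M)
    (hd : ∀ t, HasDerivAt φ (φ' t) t)
    (h0 : ∀ t, 0 ≤ φ t)
    (hlip : ∀ s t : ℝ, |φ' s - φ' t| ≤ M * |s - t|) :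
    (φ' 0) ^ 2 ≤ 4 * M * φ 0 := by
  set c := φ' 0 with hc
  set t₀ : ℝ := -c / (2 * M) with ht₀
  have key : |φ t₀ - φ 0 - c * t₀| ≤ M * |t₀| * |t₀| := by
    have hg : ∀ t : ℝ, HasDerivAt (fun t => φ t - c * t) (φ' t - c) t := by
      intro t
      have := (hd t).sub ((hasDerivAt_id t).const_mul c); simp only [mul_one] at this; exact this
    have := Convex.norm_image_sub_le_of_norm_hasDerivWithin_le
      (f := fun t => φ t - c * t) (f' := fun t => φ' t - c) (C := M * |t₀|)
      (s := Set.uIcc (0 : ℝ) t₀)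
      (fun y _ => (hg y).hasDerivWithinAt)
      (fun y hy => by
        have h1 : |φ' y - c| ≤ M * |y| := by simpa using hlip y 0
        have h2 : |y| ≤ |t₀| := by
          rcases le_total (0:ℝ) t₀ with h' | h'
          · rw [Set.uIcc_of_le h'] at hy
            rw [abs_of_nonneg hy.1, abs_of_nonneg h']; exact hy.2
          · rw [Set.uIcc_of_ge h'] at hy
            rw [abs_of_nonpos hy.2, abs_of_nonpos h']; linarith [hy.1]
        calc ‖φ' y - c‖ = |φ' y - c| := rfl
          _ ≤ M * |y| := h1
          _ ≤ M * |t₀| := by nlinarith)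
      (convex_uIcc _ _) Set.left_mem_uIcc Set.right_mem_uIcc
    simpa [Real.norm_eq_abs, abs_sub_comm, sub_sub, add_comm] using this
  have h1 : φ t₀ - φ 0 - c * t₀ ≤ M * t₀ ^ 2 := by
    have := (abs_le.mp key).2
    nlinarith [abs_nonneg t₀, sq_abs t₀]
  have h2 : 0 ≤ φ t₀ := h0 t₀
  have hct : c * t₀ = -c ^ 2 / (2 * M) := by rw [ht₀]; field_simp
  have hMt : M * t₀ ^ 2 = c ^ 2 / (4 * M) := by rw [ht₀]; field_simp; ring
  have h3 : 0 ≤ φ 0 + c * t₀ + M * t₀ ^ 2 := by linarith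
  rw [hct, hMt] at h3
  have hM' : M ≠ 0 := ne_of_gt hM
  field_simp at h3
  nlinarith [h3]


-- Lipschitz bound on the directional derivative of a C² function with bounded second derivative
lemma dirderiv_lipschitz {d : ℕ} (f : (Fin d → ℝ) → ℝ) (hf : ContDiff ℝ 2 f)
    (L : ℝ) (hbd : ∀ y, ‖iteratedFDeriv ℝ 2 f y‖ ≤ L)
    (x e : Fin d → ℝ) (he : ‖e‖ ≤ 1) (s t : ℝ) :
    |fderiv ℝ f (x + s • e) e - fderiv ℝ f (x + t • e) e| ≤ L * |s - t| := by
  have hf1 : ContDiff ℝ 1 (fderiv ℝ f) := hf.fderiv_right (by norm_num)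
  have hline : ∀ u : ℝ, HasDerivAt (fun u : ℝ => x + u • e) e u := by
    intro u
    simpa using ((hasDerivAt_id u).smul_const e).const_add x
  have hF : ∀ u : ℝ, HasDerivAt (fun u : ℝ => fderiv ℝ f (x + u • e) e)
      (fderiv ℝ (fderiv ℝ f) (x + u • e) e e) u := by
    intro u
    have hg : HasFDerivAt (fderiv ℝ f) (fderiv ℝ (fderiv ℝ f) (x + u • e)) (x + u • e) :=
      ((hf1.differentiable one_ne_zero) (x + u • e)).hasFDerivAt
    have hcomp := hg.comp_hasDerivAt u (hline u)
    simpa using hcomp.clm_apply (hasDerivAt_const u e)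
  have hbound : ∀ u : ℝ, |fderiv ℝ (fderiv ℝ f) (x + u • e) e e| ≤ L := by
    intro u
    have h1 : fderiv ℝ (fderiv ℝ f) (x + u • e) e e
        = iteratedFDeriv ℝ 2 f (x + u • e) ![e, e] := by
      rw [iteratedFDeriv_two_apply]
      simp
    rw [h1]
    calc |iteratedFDeriv ℝ 2 f (x + u • e) ![e, e]|
        ≤ ‖iteratedFDeriv ℝ 2 f (x + u • e)‖ * ∏ i : Fin 2, ‖![e, e] i‖ :=
          (iteratedFDeriv ℝ 2 f (x + u • e)).le_opNorm ![e, e]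
      _ ≤ L * 1 := by
          have hL0 : 0 ≤ L := le_trans (norm_nonneg _) (hbd x)
          have hp : ∏ i : Fin 2, ‖![e, e] i‖ ≤ 1 := by
            rw [Fin.prod_univ_two]
            simpa using mul_le_one₀ he (norm_nonneg e) he
          exact mul_le_mul (hbd _) hp (by positivity) hL0
      _ = L := mul_one L
  have := Convex.norm_image_sub_le_of_norm_hasDerivWithin_le
    (f := fun u : ℝ => fderiv ℝ f (x + u • e) e)
    (f' := fun u : ℝ => fderiv ℝ (fderiv ℝ f) (x + u • e) e e) (C := L)
    (s := Set.univ) (fun y _ => (hF y).hasDerivWithinAt)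
    (fun y _ => hbound y) convex_univ (Set.mem_univ t) (Set.mem_univ s)
  simpa [Real.norm_eq_abs] using this

lemma dir_est {d : ℕ} (L : ℝ) (hL : 0 ≤ L)
    (a : (Fin d → ℝ) → Matrix (Fin d) (Fin d) ℝ)
    (ha : ∀ i j, ContDiff ℝ 2 fun x => a x i j)
    (hpsd : ∀ x, (a x).PosSemidef)
    (hbd : ∀ x i j, ‖iteratedFDeriv ℝ 2 (fun y => a y i j) x‖ ≤ L)
    (ξ : Fin d → ℝ) (hξ : ∀ i, |ξ i| ≤ 1) (l : Fin d) (x : Fin d → ℝ) :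
    (∑ i, ∑ j, fderiv ℝ (fun y => a y i j) x (Pi.single l 1) * ξ i * ξ j) ^ 2
      ≤ 4 * ((d:ℝ)^2 * L + 1) * ∑ i, ∑ j, a x i j * ξ i * ξ j := by
  set e : Fin d → ℝ := Pi.single l 1 with he_def
  have he : ‖e‖ ≤ 1 := by
    rw [he_def, Pi.norm_single]
    simp
  set φ : ℝ → ℝ := fun t => ∑ i, ∑ j, a (x + t • e) i j * ξ i * ξ j with hφ
  set φ' : ℝ → ℝ := fun t => ∑ i, ∑ j,
    fderiv ℝ (fun y => a y i j) (x + t • e) e * ξ i * ξ j with hφ'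
  have hM : (0:ℝ) < (d:ℝ)^2 * L + 1 := by positivity
  have hline : ∀ u : ℝ, HasDerivAt (fun u : ℝ => x + u • e) e u := by
    intro u
    simpa using ((hasDerivAt_id u).smul_const e).const_add x
  have hd : ∀ t, HasDerivAt φ (φ' t) t := by
    intro t
    apply HasDerivAt.fun_sum
    intro i _
    apply HasDerivAt.fun_sum
    intro j _
    have h1 : HasDerivAt (fun u : ℝ => a (x + u • e) i j)
        (fderiv ℝ (fun y => a y i j) (x + t • e) e) t := by
      have hfd : HasFDerivAt (fun y => a y i j)
          (fderiv ℝ (fun y => a y i j) (x + t • e)) (x + t • e) :=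
        (((ha i j).differentiable (by norm_num)) _).hasFDerivAt
      exact hfd.comp_hasDerivAt t (hline t)
    exact (h1.mul_const (ξ i)).mul_const (ξ j)
  have h0 : ∀ t, 0 ≤ φ t := by
    intro t
    have := (hpsd (x + t • e)).dotProduct_mulVec_nonneg ξ
    have heq : dotProduct (star ξ) ((a (x + t • e)).mulVec ξ) = φ t := by
      simp only [hφ, dotProduct, Matrix.mulVec, star_trivial]
      refine Finset.sum_congr rfl fun i _ => ?_
      rw [Finset.mul_sum]
      refine Finset.sum_congr rfl fun j _ => ?_
      ring
    rwa [heq] at this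
  have hlip : ∀ s t : ℝ, |φ' s - φ' t| ≤ ((d:ℝ)^2 * L + 1) * |s - t| := by
    intro s t
    have h1 : φ' s - φ' t = ∑ i, ∑ j,
        (fderiv ℝ (fun y => a y i j) (x + s • e) e
          - fderiv ℝ (fun y => a y i j) (x + t • e) e) * ξ i * ξ j := by
      rw [hφ', ← Finset.sum_sub_distrib]
      congr 1; ext i
      rw [← Finset.sum_sub_distrib]
      congr 1; ext j
      ring
    rw [h1]
    calc |∑ i, ∑ j, (fderiv ℝ (fun y => a y i j) (x + s • e) e
          - fderiv ℝ (fun y => a y i j) (x + t • e) e) * ξ i * ξ j|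
        ≤ ∑ i, ∑ j, |(fderiv ℝ (fun y => a y i j) (x + s • e) e
          - fderiv ℝ (fun y => a y i j) (x + t • e) e) * ξ i * ξ j| := by
          apply le_trans (Finset.abs_sum_le_sum_abs _ _)
          apply Finset.sum_le_sum
          intro i _
          exact Finset.abs_sum_le_sum_abs _ _
      _ ≤ ∑ _i : Fin d, ∑ _j : Fin d, L * |s - t| := by
          apply Finset.sum_le_sum
          intro i _
          apply Finset.sum_le_sum
          intro j _
          rw [abs_mul, abs_mul]
          calc |fderiv ℝ (fun y => a y i j) (x + s • e) e
                - fderiv ℝ (fun y => a y i j) (x + t • e) e| * |ξ i| * |ξ j|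
              ≤ (L * |s - t|) * 1 * 1 := by
                apply mul_le_mul _ (hξ j) (abs_nonneg _)
                · positivity
                apply mul_le_mul _ (hξ i) (abs_nonneg _)
                · positivity
                exact dirderiv_lipschitz _ (ha i j) L (fun y => hbd y i j) x e he s t
            _ = L * |s - t| := by ring
      _ = (d:ℝ)^2 * (L * |s - t|) := by
          simp [Finset.sum_const]
          ring
      _ ≤ ((d:ℝ)^2 * L + 1) * |s - t| := by
          have := abs_nonneg (s - t)
          nlinarith
  have key := oneDim_est φ φ' _ hM hd h0 hlip
  have hφ0 : φ 0 = ∑ i, ∑ j, a x i j * ξ i * ξ j := by simp [hφ]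
  have hφ'0 : φ' 0 = ∑ i, ∑ j, fderiv ℝ (fun y => a y i j) x e * ξ i * ξ j := by
    simp [hφ']
  rw [hφ0, hφ'0] at key
  exact key



/-- Oleinik–Radkevich type estimate: if `a` takes values in symmetric nonnegative-definite
matrices with second-order derivatives bounded by `L`, then
`|D_l a^{ij} V^{ij}|² ≤ N a^{ij} V^{ik} V^{jk}` for symmetric `V`, with `N = N(L,d)`. -/
theorem oleinik_estimate (d : ℕ) (L : ℝ) (hL : 0 ≤ L) :
    ∃ N : ℝ, ∀ a : (Fin d → ℝ) → Matrix (Fin d) (Fin d) ℝ,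
      (∀ i j, ContDiff ℝ 2 fun x => a x i j) →
      (∀ x, (a x).IsSymm) → (∀ x, (a x).PosSemidef) →
      (∀ x i j, ‖iteratedFDeriv ℝ 2 (fun y => a y i j) x‖ ≤ L) →
      ∀ V : Matrix (Fin d) (Fin d) ℝ, V.IsSymm → ∀ (l : Fin d) (x : Fin d → ℝ),
        (∑ i, ∑ j, fderiv ℝ (fun y => a y i j) x (Pi.single l 1) * V i j) ^ 2
          ≤ N * ∑ i, ∑ j, ∑ m, a x i j * V i m * V j m := by
  refine ⟨(d:ℝ) * (4 * ((d:ℝ)^2 * L + 1)), ?_⟩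
  intro a ha hsymm hpsd hbd V hVs l x
  -- V is Hermitian (real symmetric)
  have hH : V.IsHermitian := by
    rw [Matrix.IsHermitian]
    ext i j
    rw [Matrix.conjTranspose_apply, star_trivial]
    have h := congrFun (congrFun hVs i) j
    rwa [Matrix.transpose_apply] at h
  set U : Matrix (Fin d) (Fin d) ℝ := (hH.eigenvectorUnitary : Matrix (Fin d) (Fin d) ℝ)
    with hU_def
  set lam : Fin d → ℝ := hH.eigenvalues with hlam_def
  -- entrywise spectral theorem
  have hVij : ∀ i j, V i j = ∑ k, lam k * U i k * U j k := by
    intro i j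
    conv_lhs => rw [hH.spectral_theorem]
    rw [Unitary.conjStarAlgAut_apply, Matrix.mul_apply]
    refine Finset.sum_congr rfl fun k _ => ?_
    rw [Matrix.mul_diagonal]
    simp only [Matrix.star_apply, star_trivial, Function.comp_apply]
    norm_num
    simp only [hU_def, Matrix.IsHermitian.eigenvectorUnitary_apply]
    ring
  -- orthonormality of columns
  have ortho : ∀ k k', ∑ m, U m k * U m k' = if k = k' then 1 else 0 := by
    intro k k'
    have h := Unitary.coe_star_mul_self hH.eigenvectorUnitary
    have h2 := congrFun (congrFun (congrArg (fun M : Matrix (Fin d) (Fin d) ℝ => M) h) k) k'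
    simp only [Matrix.mul_apply, Matrix.star_apply, star_trivial, Matrix.one_apply] at h2
    exact h2
  -- entries of U bounded by 1
  have hU1 : ∀ i k, |U i k| ≤ 1 := by
    intro i k
    have h := ortho k k
    rw [if_pos rfl] at h
    rw [abs_le_one_iff_mul_self_le_one]
    calc U i k * U i k ≤ ∑ m, U m k * U m k :=
          Finset.single_le_sum (fun m _ => mul_self_nonneg (U m k)) (Finset.mem_univ i)
      _ = 1 := h
  -- ∑ₘ V i m * V j m in terms of eigen-decomposition
  have hVsq : ∀ i j, ∑ m, V i m * V j m = ∑ k, lam k ^ 2 * U i k * U j k := by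
    intro i j
    calc ∑ m, V i m * V j m
        = ∑ m, ∑ k, ∑ k', (lam k * U i k * U m k) * (lam k' * U j k' * U m k') := by
          refine Finset.sum_congr rfl fun m _ => ?_
          rw [hVij i m, hVij j m, Finset.sum_mul_sum]
      _ = ∑ k, ∑ k', (lam k * U i k) * (lam k' * U j k') * ∑ m, U m k * U m k' := by
          rw [Finset.sum_comm]
          refine Finset.sum_congr rfl fun k _ => ?_
          rw [Finset.sum_comm]
          refine Finset.sum_congr rfl fun k' _ => ?_
          rw [Finset.mul_sum]
          refine Finset.sum_congr rfl fun m _ => ?_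
          ring
      _ = ∑ k, ∑ k', (if k = k' then (lam k * U i k) * (lam k' * U j k') else 0) := by
          refine Finset.sum_congr rfl fun k _ => Finset.sum_congr rfl fun k' _ => ?_
          rw [ortho k k', mul_ite, mul_one, mul_zero]
      _ = ∑ k, lam k ^ 2 * U i k * U j k := by
          refine Finset.sum_congr rfl fun k _ => ?_
          rw [Finset.sum_ite_eq]
          simp only [Finset.mem_univ, if_pos]
          ring
  set D : Fin d → Fin d → ℝ := fun i j => fderiv ℝ (fun y => a y i j) x (Pi.single l 1)
    with hD_def
  set c : Fin d → ℝ := fun k => ∑ i, ∑ j, D i j * U i k * U j k with hc_def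
  set q : Fin d → ℝ := fun k => ∑ i, ∑ j, a x i j * U i k * U j k with hq_def
  have hLHS : ∑ i, ∑ j, D i j * V i j = ∑ k, lam k * c k := by
    calc ∑ i, ∑ j, D i j * V i j
        = ∑ i, ∑ j, ∑ k, lam k * (D i j * U i k * U j k) := by
          refine Finset.sum_congr rfl fun i _ => Finset.sum_congr rfl fun j _ => ?_
          rw [hVij i j, Finset.mul_sum]
          refine Finset.sum_congr rfl fun k _ => ?_
          ring
      _ = ∑ k, lam k * c k := by
          have h1 : ∀ i, ∑ j, ∑ k, lam k * (D i j * U i k * U j k)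
              = ∑ k, ∑ j, lam k * (D i j * U i k * U j k) := fun i => Finset.sum_comm
          simp_rw [h1]
          rw [Finset.sum_comm]
          refine Finset.sum_congr rfl fun k _ => ?_
          simp only [hc_def]
          rw [Finset.mul_sum]
          refine Finset.sum_congr rfl fun i _ => ?_
          rw [Finset.mul_sum]
  have hRHS : ∑ i, ∑ j, ∑ m, a x i j * V i m * V j m = ∑ k, lam k ^ 2 * q k := by
    calc ∑ i, ∑ j, ∑ m, a x i j * V i m * V j m
        = ∑ i, ∑ j, ∑ k, lam k ^ 2 * (a x i j * U i k * U j k) := by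
          refine Finset.sum_congr rfl fun i _ => Finset.sum_congr rfl fun j _ => ?_
          have : ∑ m, a x i j * V i m * V j m = a x i j * ∑ m, V i m * V j m := by
            rw [Finset.mul_sum]
            refine Finset.sum_congr rfl fun m _ => ?_
            ring
          rw [this, hVsq i j, Finset.mul_sum]
          refine Finset.sum_congr rfl fun k _ => ?_
          ring
      _ = ∑ k, lam k ^ 2 * q k := by
          have h1 : ∀ i, ∑ j, ∑ k, lam k ^ 2 * (a x i j * U i k * U j k)
              = ∑ k, ∑ j, lam k ^ 2 * (a x i j * U i k * U j k) := fun i => Finset.sum_comm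
          simp_rw [h1]
          rw [Finset.sum_comm]
          refine Finset.sum_congr rfl fun k _ => ?_
          simp only [hq_def]
          rw [Finset.mul_sum]
          refine Finset.sum_congr rfl fun i _ => ?_
          rw [Finset.mul_sum]
  rw [hLHS, hRHS]
  calc (∑ k, lam k * c k) ^ 2
      ≤ (((Finset.univ : Finset (Fin d))).card : ℝ) * ∑ k, (lam k * c k) ^ 2 := by
        exact sq_sum_le_card_mul_sum_sq (s := (Finset.univ : Finset (Fin d))) (f := fun k => lam k * c k)
    _ ≤ (d:ℝ) * ∑ k, lam k ^ 2 * (4 * ((d:ℝ)^2 * L + 1) * q k) := by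
        have hcard : (((Finset.univ : Finset (Fin d))).card : ℝ) = (d:ℝ) := by simp
        rw [hcard]
        refine mul_le_mul_of_nonneg_left ?_ (Nat.cast_nonneg d)
        apply Finset.sum_le_sum
        intro k _
        have hk := dir_est L hL a ha hpsd hbd (fun i => U i k) (fun i => hU1 i k) l x
        have hk' : c k ^ 2 ≤ 4 * ((d:ℝ)^2 * L + 1) * q k := by
          simpa only [hc_def, hq_def, hD_def] using hk
        have h2 : (lam k * c k) ^ 2 = lam k ^ 2 * c k ^ 2 := by ring
        rw [h2]
        exact mul_le_mul_of_nonneg_left hk' (sq_nonneg _)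
    _ = (d:ℝ) * (4 * ((d:ℝ)^2 * L + 1)) * ∑ k, lam k ^ 2 * q k := by
        have : ∑ k, lam k ^ 2 * (4 * ((d:ℝ)^2 * L + 1) * q k)
            = 4 * ((d:ℝ)^2 * L + 1) * ∑ k, lam k ^ 2 * q k := by
          rw [Finset.mul_sum]
          refine Finset.sum_congr rfl fun k _ => ?_
          ring
        rw [this]
        ring
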